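/- Let G be a finite group and x an element of the simplex S ⊂ R[G] such that all coordinates of x are strictly positive. Then x^n converges to c = (1/|G|) Σ_{g∈G} g as n → ∞. -/

import Mathlib

open Filter Topology Finset

lemma mul_apply_fin {G : Type*} [Group G] [Fintype G] (f g : MonoidAlgebra ℝ G) (y : G) :
    (f * g).coeff y = ∑ a : G, f.coeff a * g.coeff (a⁻¹ * y) := by
  rw [MonoidAlgebra.coeff_mul_apply_left, Finsupp.sum_fintype]
  intro a; simp

lemma sum_mul_fin {G : Type*} [Group G] [Fintype G] (f g : MonoidAlgebra ℝ G) :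
    ∑ y : G, (f * g).coeff y = (∑ a : G, f.coeff a) * (∑ b : G, g.coeff b) := by
  simp only [mul_apply_fin]
  rw [Finset.sum_comm, Finset.sum_mul]
  refine Finset.sum_congr rfl fun a _ => ?_
  rw [← Finset.mul_sum]
  congr 1
  exact Fintype.sum_equiv (Equiv.mulLeft a⁻¹) _ _ (fun y => rfl)

/-- For `x` in the simplex of `R[G]` with all coordinates strictly positive,
`x^n` converges to the barycenter `c = (1/|G|) Σ_{g∈G} g` (coordinatewise). -/
theorem stmt7 {G : Type*} [Group G] [Fintype G]
    (x : MonoidAlgebra ℝ G) (hx1 : ∑ g : G, x.coeff g = 1) (hx0 : ∀ g, 0 < x.coeff g) :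
    ∀ g : G, Tendsto (fun n : ℕ => (x ^ n).coeff g) atTop (nhds ((Fintype.card G : ℝ)⁻¹)) := by
  classical
  set c : ℝ := (Fintype.card G : ℝ)⁻¹ with hc
  have hcardpos : (0 : ℝ) < Fintype.card G := by positivity
  set ε : ℝ := Finset.univ.inf' Finset.univ_nonempty x.coeff with hε
  have hεpos : 0 < ε := by
    rw [hε, Finset.lt_inf'_iff]
    exact fun g _ => hx0 g
  have hεle : ∀ g : G, ε ≤ x.coeff g := fun g => Finset.inf'_le _ (Finset.mem_univ g)
  set r : ℝ := 1 - (Fintype.card G : ℝ) * ε with hr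
  have hrval : r = ∑ h : G, (x.coeff h - ε) := by
    rw [Finset.sum_sub_distrib, hx1, Finset.sum_const, hr]
    simp [nsmul_eq_mul]
  have hr0 : 0 ≤ r := by
    rw [hrval]
    exact Finset.sum_nonneg fun h _ => sub_nonneg.2 (hεle h)
  have hr1 : r < 1 := by
    rw [hr]
    nlinarith
  -- sums of powers are 1
  have hsum : ∀ n : ℕ, ∑ g : G, (x ^ n).coeff g = 1 := by
    intro n
    induction n with
    | zero =>
      simp only [pow_zero, MonoidAlgebra.one_def]
      simp [Finsupp.single_apply]
    | succ n ih =>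
      rw [pow_succ, sum_mul_fin, ih, hx1, one_mul]
  have hsumc : ∑ _g : G, c = 1 := by
    rw [Finset.sum_const, nsmul_eq_mul, Finset.card_univ, hc,
      mul_inv_cancel₀ (ne_of_gt hcardpos)]
  set d : ℕ → ℝ := fun n => ∑ g : G, |(x ^ n).coeff g - c| with hd
  have hd0 : ∀ n, 0 ≤ d n := fun n => Finset.sum_nonneg fun g _ => abs_nonneg _
  -- contraction
  have hdiff : ∀ n : ℕ, ∀ g : G,
      (x ^ (n + 1)).coeff g - c = ∑ h : G, (x.coeff h - ε) * ((x ^ n).coeff (h⁻¹ * g) - c) := by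
    intro n g
    have h1 : (x ^ (n + 1)).coeff g = ∑ h : G, x.coeff h * (x ^ n).coeff (h⁻¹ * g) := by
      rw [pow_succ', mul_apply_fin]
    have h2 : ∑ h : G, (x ^ n).coeff (h⁻¹ * g) = 1 := by
      rw [← hsum n]
      exact Fintype.sum_equiv ((Equiv.inv G).trans (Equiv.mulRight g)) _ _ (fun h => rfl)
    have key : ∑ h : G, x.coeff h * ((x ^ n).coeff (h⁻¹ * g) - c)
        = (∑ h : G, x.coeff h * (x ^ n).coeff (h⁻¹ * g)) - c := by
      simp only [mul_sub]
      rw [Finset.sum_sub_distrib, ← Finset.sum_mul, hx1, one_mul]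
    calc (x ^ (n + 1)).coeff g - c = ∑ h : G, x.coeff h * ((x ^ n).coeff (h⁻¹ * g) - c) := by
          rw [h1, key]
      _ = (∑ h : G, (x.coeff h - ε) * ((x ^ n).coeff (h⁻¹ * g) - c))
            + ε * ∑ h : G, ((x ^ n).coeff (h⁻¹ * g) - c) := by
          rw [Finset.mul_sum, ← Finset.sum_add_distrib]
          exact Finset.sum_congr rfl fun h _ => by ring
      _ = ∑ h : G, (x.coeff h - ε) * ((x ^ n).coeff (h⁻¹ * g) - c) := by
          rw [Finset.sum_sub_distrib, h2, hsumc]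
          ring
  have hcontr : ∀ n : ℕ, d (n + 1) ≤ r * d n := by
    intro n
    have step1 : d (n + 1) ≤ ∑ g : G, ∑ h : G, (x.coeff h - ε) * |(x ^ n).coeff (h⁻¹ * g) - c| := by
      refine Finset.sum_le_sum fun g _ => ?_
      rw [hdiff n g]
      refine (Finset.abs_sum_le_sum_abs _ _).trans (le_of_eq ?_)
      refine Finset.sum_congr rfl fun h _ => ?_
      rw [abs_mul, abs_of_nonneg (sub_nonneg.2 (hεle h))]
    have step2 : ∑ g : G, ∑ h : G, (x.coeff h - ε) * |(x ^ n).coeff (h⁻¹ * g) - c| = r * d n := by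
      rw [Finset.sum_comm, hrval, Finset.sum_mul]
      refine Finset.sum_congr rfl fun h _ => ?_
      rw [← Finset.mul_sum]
      congr 1
      exact Fintype.sum_equiv (Equiv.mulLeft h⁻¹) _ _ (fun g => rfl)
    exact le_of_le_of_eq step1 step2
  have hgeo : ∀ n : ℕ, d n ≤ r ^ n * d 0 := by
    intro n
    induction n with
    | zero => simp
    | succ n ih =>
      calc d (n + 1) ≤ r * d n := hcontr n
        _ ≤ r * (r ^ n * d 0) := mul_le_mul_of_nonneg_left ih hr0
        _ = r ^ (n + 1) * d 0 := by ring
  intro g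
  have hbound : ∀ n : ℕ, |(x ^ n).coeff g - c| ≤ r ^ n * d 0 := by
    intro n
    refine le_trans ?_ (hgeo n)
    exact Finset.single_le_sum (f := fun h => |(x ^ n).coeff h - c|)
      (fun h _ => abs_nonneg _) (Finset.mem_univ g)
  have htend0 : Tendsto (fun n : ℕ => (x ^ n).coeff g - c) atTop (nhds 0) := by
    have hg : Tendsto (fun n : ℕ => r ^ n * d 0) atTop (nhds 0) := by
      have := (tendsto_pow_atTop_nhds_zero_of_lt_one hr0 hr1).mul_const (d 0)
      simpa using this
    exact squeeze_zero_norm (fun n => by simpa [Real.norm_eq_abs] using hbound n) hg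
  have := htend0.add_const c
  simpa using this
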